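/- For every m > 0, the function H_m is strictly increasing on [r₀(m), 3m] and strictly decreasing on [3m, ∞), attains its maximum value (2/(3m))√(1/3 + 9m²) at r = 3m, and H_m(r) → 2 as r → ∞. In particular, H_m restricted to [3m, ∞) is a strictly decreasing bijection onto the interval (2, (2/(3m))√(1/3 + 9m²)], so for every ℓ in (2, (2/(3m))√(1/3 + 9m²)) there is a unique r > 3m with H_m(r) = ℓ, and this r tends to ∞ as ℓ → 2⁺. -/

import Mathlib

open Filter Set

/-- The mean curvature `H_m(r) = (2/r)√(1 + r² − 2m/r)` of the coordinate sphere `S_r`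
in the Schwarzschild anti-de Sitter space of mass `m`. -/
noncomputable def Hm (m r : ℝ) : ℝ := (2 / r) * Real.sqrt (1 + r ^ 2 - 2 * m / r)

noncomputable def gAux (m r : ℝ) : ℝ := 4 + 4 / r ^ 2 - 8 * m / r ^ 3

lemma gAux_eq (m r : ℝ) (hr : 0 < r) : gAux m r = (4 * (r ^ 3 + r) - 8 * m) / r ^ 3 := by
  unfold gAux; field_simp

lemma Hm_eq (m r : ℝ) (hr : 0 < r) : Hm m r = Real.sqrt (gAux m r) := by
  unfold Hm gAux
  rw [show 4 + 4 / r ^ 2 - 8 * m / r ^ 3 = (2 / r) ^ 2 * (1 + r ^ 2 - 2 * m / r) by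
      field_simp; ring,
    Real.sqrt_mul (sq_nonneg _), Real.sqrt_sq (by positivity)]

lemma gAux_mono (m : ℝ) {a b : ℝ} (ha : 0 < a) (hab : a < b) (hb : b ≤ 3 * m) :
    gAux m a < gAux m b := by
  have hb0 : 0 < b := ha.trans hab
  rw [gAux_eq m a ha, gAux_eq m b hb0, div_lt_div_iff₀ (by positivity) (by positivity)]
  nlinarith [mul_nonneg (mul_nonneg (sub_pos.2 hab).le (by nlinarith : (0:ℝ) ≤ 6 * m - 2 * b))
      (by positivity : (0:ℝ) ≤ a ^ 2 + a * b + b ^ 2),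
    mul_pos (sub_pos.2 hab) (mul_pos (mul_pos hb0 (sub_pos.2 hab)) (by linarith : (0:ℝ) < 2 * b + a))]

lemma gAux_anti (m : ℝ) (hm : 0 < m) {a b : ℝ} (ha : 3 * m ≤ a) (hab : a < b) :
    gAux m b < gAux m a := by
  have ha0 : 0 < a := by linarith
  have hb0 : 0 < b := ha0.trans hab
  rw [gAux_eq m a ha0, gAux_eq m b hb0, div_lt_div_iff₀ (by positivity) (by positivity)]
  nlinarith [mul_nonneg (mul_nonneg (sub_pos.2 hab).le (by linarith : (0:ℝ) ≤ 2 * a - 6 * m))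
      (by positivity : (0:ℝ) ≤ a ^ 2 + a * b + b ^ 2),
    mul_pos (sub_pos.2 hab) (mul_pos (mul_pos ha0 (sub_pos.2 hab)) (by linarith : (0:ℝ) < b + 2 * a))]

/-- For every `m > 0`, the function `H_m` is strictly increasing on
`[r₀(m), 3m]` and strictly decreasing on `[3m, ∞)`, attains its maximum value
`(2/(3m))√(1/3 + 9m²)` at `r = 3m`, and `H_m(r) → 2` as `r → ∞`.  In particular, `H_m`
restricted to `[3m, ∞)` is a strictly decreasing bijection onto `(2, (2/(3m))√(1/3 + 9m²)]`,
so for every `ℓ ∈ (2, (2/(3m))√(1/3 + 9m²))` there is a unique `r > 3m` with `H_m(r) = ℓ`,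
and this `r` tends to `∞` as `ℓ → 2⁺`. -/
theorem penrose_stmt3 (m r₀ : ℝ) (hm : 0 < m) (hr₀ : 0 < r₀)
    (hroot : r₀ ^ 3 + r₀ = 2 * m) :
    StrictMonoOn (Hm m) (Set.Icc r₀ (3 * m)) ∧
    StrictAntiOn (Hm m) (Set.Ici (3 * m)) ∧
    Hm m (3 * m) = (2 / (3 * m)) * Real.sqrt (1 / 3 + 9 * m ^ 2) ∧
    (∀ r : ℝ, r₀ ≤ r → Hm m r ≤ (2 / (3 * m)) * Real.sqrt (1 / 3 + 9 * m ^ 2)) ∧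
    Filter.Tendsto (Hm m) Filter.atTop (nhds 2) ∧
    Set.BijOn (Hm m) (Set.Ici (3 * m))
      (Set.Ioc 2 ((2 / (3 * m)) * Real.sqrt (1 / 3 + 9 * m ^ 2))) ∧
    (∀ ℓ : ℝ, 2 < ℓ → ℓ < (2 / (3 * m)) * Real.sqrt (1 / 3 + 9 * m ^ 2) →
      ∃! r : ℝ, 3 * m < r ∧ Hm m r = ℓ) ∧
    ∀ K : ℝ, ∃ δ : ℝ, 0 < δ ∧
      ∀ ℓ r : ℝ, 2 < ℓ → ℓ < 2 + δ → 3 * m ≤ r → Hm m r = ℓ → K < r := by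
  have hm3 : 0 < 3 * m := by linarith
  have hr03 : r₀ < 3 * m := by nlinarith [pow_pos hr₀ 3]
  -- value at 3m
  have hM : Hm m (3 * m) = (2 / (3 * m)) * Real.sqrt (1 / 3 + 9 * m ^ 2) := by
    unfold Hm
    rw [show 1 + (3 * m) ^ 2 - 2 * m / (3 * m) = 1 / 3 + 9 * m ^ 2 by field_simp; ring]
  set M := (2 / (3 * m)) * Real.sqrt (1 / 3 + 9 * m ^ 2) with hMdef
  -- g nonneg on [r₀, ∞)
  have hgnn : ∀ r : ℝ, r₀ ≤ r → 0 ≤ gAux m r := by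
    intro r hr
    have hr0 : 0 < r := lt_of_lt_of_le hr₀ hr
    rw [gAux_eq m r hr0]
    apply div_nonneg _ (by positivity)
    nlinarith [pow_le_pow_left₀ hr₀.le hr 3]
  -- g > 4 on [3m, ∞)
  have hg4 : ∀ r : ℝ, 3 * m ≤ r → 4 < gAux m r := by
    intro r hr
    have hr0 : 0 < r := lt_of_lt_of_le hm3 hr
    rw [gAux_eq m r hr0, lt_div_iff₀ (by positivity)]
    nlinarith
  have hsqrt4 : Real.sqrt 4 = 2 := by
    rw [show (4:ℝ) = 2 ^ 2 by norm_num, Real.sqrt_sq (by norm_num)]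
  have hHgt2 : ∀ r : ℝ, 3 * m ≤ r → 2 < Hm m r := by
    intro r hr
    rw [Hm_eq m r (lt_of_lt_of_le hm3 hr), ← hsqrt4]
    exact Real.sqrt_lt_sqrt (by norm_num) (hg4 r hr)
  have hmono : StrictMonoOn (Hm m) (Set.Icc r₀ (3 * m)) := by
    intro a ha b hb hab
    have ha0 : 0 < a := lt_of_lt_of_le hr₀ ha.1
    rw [Hm_eq m a ha0, Hm_eq m b (ha0.trans hab)]
    exact Real.sqrt_lt_sqrt (hgnn a ha.1) (gAux_mono m ha0 hab hb.2)
  have hanti : StrictAntiOn (Hm m) (Set.Ici (3 * m)) := by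
    intro a ha b hb hab
    have ha0 : 0 < a := lt_of_lt_of_le hm3 ha
    rw [Hm_eq m a ha0, Hm_eq m b (ha0.trans hab)]
    exact Real.sqrt_lt_sqrt (hgnn b (le_trans hr03.le hb)) (gAux_anti m hm ha hab)
  have hmax : ∀ r : ℝ, r₀ ≤ r → Hm m r ≤ Hm m (3 * m) := by
    intro r hr
    rcases le_total r (3 * m) with h | h
    · exact hmono.monotoneOn ⟨hr, h⟩ ⟨hr03.le, le_refl _⟩ h
    · exact hanti.antitoneOn (Set.self_mem_Ici) h h
  -- tendsto
  have hgtend : Tendsto (gAux m) atTop (nhds 4) := by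
    have h1 : Tendsto (fun r : ℝ => 4 / r ^ 2) atTop (nhds 0) :=
      tendsto_const_nhds.div_atTop (tendsto_pow_atTop two_ne_zero)
    have h2 : Tendsto (fun r : ℝ => 8 * m / r ^ 3) atTop (nhds 0) :=
      tendsto_const_nhds.div_atTop (tendsto_pow_atTop three_ne_zero)
    have := ((tendsto_const_nhds (x := (4:ℝ))).add h1).sub h2
    have h4 : Tendsto (fun x : ℝ => 4 + 4 / x ^ 2 - 8 * m / x ^ 3) atTop (nhds 4) := by
      simpa using this
    exact h4
  have htend : Tendsto (Hm m) atTop (nhds 2) := by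
    have heq : (fun r => Real.sqrt (gAux m r)) =ᶠ[atTop] Hm m := by
      filter_upwards [eventually_gt_atTop 0] with r hr using (Hm_eq m r hr).symm
    have h := (Real.continuous_sqrt.tendsto 4).comp hgtend
    rw [hsqrt4] at h
    exact h.congr' heq
  -- continuity
  have hcont : ContinuousOn (Hm m) (Set.Ici (3 * m)) := by
    unfold Hm
    apply ContinuousOn.mul
    · exact continuousOn_const.div continuousOn_id fun x hx => ne_of_gt (lt_of_lt_of_le hm3 hx)
    · apply ContinuousOn.sqrt
      apply ContinuousOn.sub
      · exact (continuousOn_const.add ((continuous_pow 2).continuousOn))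
      · exact continuousOn_const.div continuousOn_id fun x hx => ne_of_gt (lt_of_lt_of_le hm3 hx)
  have hmaps : Set.MapsTo (Hm m) (Set.Ici (3 * m)) (Set.Ioc 2 M) := by
    intro r hr
    exact ⟨hHgt2 r hr, hM ▸ hmax r (le_trans hr03.le hr)⟩
  have hsurj : Set.SurjOn (Hm m) (Set.Ici (3 * m)) (Set.Ioc 2 M) := by
    intro y hy
    have h1 : ∀ᶠ r in atTop, Hm m r < y := htend.eventually_lt_const hy.1
    obtain ⟨b, hb⟩ := (h1.and (eventually_ge_atTop (3 * m))).exists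
    have hiv := intermediate_value_Icc' hb.2 (hcont.mono (Set.Icc_subset_Ici_self))
    have hy' : y ∈ Set.Icc (Hm m b) (Hm m (3 * m)) := ⟨hb.1.le, hM ▸ hy.2⟩
    obtain ⟨r, hr, hry⟩ := hiv hy'
    exact ⟨r, hr.1, hry⟩
  have hbij : Set.BijOn (Hm m) (Set.Ici (3 * m)) (Set.Ioc 2 M) :=
    ⟨hmaps, hanti.injOn, hsurj⟩
  refine ⟨hmono, hanti, hM, fun r hr => hM ▸ hmax r hr, htend, hbij, ?_, ?_⟩
  · intro ℓ h2 hℓM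
    obtain ⟨r, hr, hrℓ⟩ := hsurj ⟨h2, hℓM.le⟩
    have hrgt : 3 * m < r := by
      rcases lt_or_eq_of_le (show 3 * m ≤ r from hr) with h | h
      · exact h
      · exfalso; rw [← h, hM] at hrℓ; exact (ne_of_gt hℓM) hrℓ
    refine ⟨r, ⟨hrgt, hrℓ⟩, ?_⟩
    rintro r' ⟨hr', hr'ℓ⟩
    exact hanti.injOn hr'.le hr (hr'ℓ.trans hrℓ.symm)
  · intro K
    set b := max (3 * m) K with hbdef
    have hb3 : 3 * m ≤ b := le_max_left _ _
    refine ⟨Hm m b - 2, by have := hHgt2 b hb3; linarith, ?_⟩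
    intro ℓ r h2 hδ h3r hr
    by_contra hK
    push_neg at hK
    have hrb : r ≤ b := le_trans hK (le_max_right _ _)
    have := hanti.antitoneOn h3r (le_trans h3r hrb) hrb
    rw [hr] at this
    linarith
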